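/- arXiv:1801.10354 — 2 statements merged into one kernel-verified Lean document; each statement's English description precedes it below -/
import Mathlib

section
/- Convolution decay lemma: let X, Y be Banach spaces and S(t) a family of bounded operators such that ‖S(t)‖_{X→X} ≤ C_X e^{−at^b}, ‖S(t)‖_{Y→Y} ≤ C_Y e^{−at^b}, and ‖S(t)‖_{X→Y} ≤ C_{X,Y} t^{−α} e^{−at^b} for all t > 0, with a > 0, 0 < b < 1, α > 0. Define the n-fold time convolution S^{(*n)}(t) = ∫₀^t S(s) S^{(*(n-1))}(t−s) ds. Then for every integer n ≥ 1: ‖S^{(*n)}(t)‖_{X→X} ≤ C_{X,n} t^{n−1} e^{−at^b}, and if n > α+1, for every b* < b there is C with ‖S^{(*n)}(t)‖_{X→Y} ≤ C e^{−a t^{b*}}. -/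
open MeasureTheory Real intervalIntegral

private lemma aux_rpow_subadd (p : ℝ) (hp0 : 0 ≤ p) (hp1 : p ≤ 1) (x y : ℝ)
    (hx : 0 ≤ x) (hy : 0 ≤ y) : (x + y) ^ p ≤ x ^ p + y ^ p := by
  have h := NNReal.rpow_add_le_add_rpow (Real.toNNReal x) (Real.toNNReal y) hp0 hp1
  have h2 := NNReal.coe_le_coe.2 h
  push_cast at h2
  rwa [Real.coe_toNNReal x hx, Real.coe_toNNReal y hy] at h2

private lemma aux_between (u v x c : ℝ) (hu : 0 < u) (hux : u ≤ x) (hxv : x ≤ v) :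
    x ^ c ≤ u ^ c + v ^ c := by
  rcases le_or_gt 0 c with hc | hc
  · have h := Real.rpow_le_rpow (hu.trans_le hux).le hxv hc
    nlinarith [Real.rpow_nonneg hu.le c]
  · have h := Real.rpow_le_rpow_of_nonpos hu hux hc.le
    nlinarith [Real.rpow_nonneg ((hu.trans_le hux).trans_le hxv).le c]

private lemma aux_growth (b c β : ℝ) (hb : 0 < b) (hc : 0 < c) (hβ : 0 ≤ β) :
    ∃ K : ℝ, 0 ≤ K ∧ ∀ t : ℝ, 0 < t → t ^ β ≤ K * Real.exp (c * t ^ b) := by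
  set m : ℕ := ⌈β / b⌉₊ + 1 with hm
  have hm0 : 0 < (m : ℝ) := by positivity
  refine ⟨1 + ((m : ℝ) / c) ^ m, by positivity, fun t ht => ?_⟩
  have htb0 : 0 ≤ t ^ b := Real.rpow_nonneg ht.le b
  have hexp1 : (1 : ℝ) ≤ Real.exp (c * t ^ b) := Real.one_le_exp (by positivity)
  rcases le_total t 1 with h1 | h1
  · have h2 : t ^ β ≤ 1 := Real.rpow_le_one ht.le h1 hβ
    have h3 : (0:ℝ) ≤ ((m : ℝ) / c) ^ m := by positivity
    nlinarith [mul_nonneg h3 (by linarith : (0:ℝ) ≤ Real.exp (c * t ^ b) - 1)]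
  · have hβm : β ≤ (m : ℝ) * b := by
      have h2 : β / b ≤ (⌈β / b⌉₊ : ℝ) := Nat.le_ceil _
      have h3 : (⌈β / b⌉₊ : ℝ) ≤ (m : ℝ) := by exact_mod_cast Nat.le_succ _
      rw [div_le_iff₀ hb] at h2
      nlinarith
    have e1 : t ^ β ≤ t ^ ((m : ℝ) * b) := Real.rpow_le_rpow_of_exponent_le h1 hβm
    have e2 : t ^ ((m : ℝ) * b) = (t ^ b) ^ m := by
      rw [mul_comm, Real.rpow_mul ht.le, Real.rpow_natCast]
    set y := c * t ^ b / m with hy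
    have hy0 : 0 ≤ y := by positivity
    have htbe : t ^ b = ((m : ℝ) / c) * y := by
      rw [hy]; field_simp
    have e3 : (t ^ b) ^ m = ((m : ℝ) / c) ^ m * y ^ m := by rw [htbe, mul_pow]
    have e4 : y ^ m ≤ (Real.exp y) ^ m :=
      pow_le_pow_left₀ hy0 (by linarith [Real.add_one_le_exp y]) m
    have e5 : (Real.exp y) ^ m = Real.exp (c * t ^ b) := by
      rw [← Real.exp_nat_mul]
      congr 1
      rw [hy]; field_simp
    calc t ^ β ≤ (t ^ b) ^ m := by rw [← e2]; exact e1
      _ = ((m : ℝ) / c) ^ m * y ^ m := e3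
      _ ≤ ((m : ℝ) / c) ^ m * Real.exp (c * t ^ b) := by
          rw [← e5]; exact mul_le_mul_of_nonneg_left e4 (by positivity)
      _ ≤ (1 + ((m : ℝ) / c) ^ m) * Real.exp (c * t ^ b) := by
          nlinarith [Real.exp_pos (c * t ^ b)]

private lemma aux_bprime (b b' : ℝ) (hb'0 : 0 < b') (hb'b : b' < b) :
    ∃ M : ℝ, 0 ≤ M ∧ ∀ t : ℝ, 0 < t → t ^ b' ≤ M + t ^ b / 2 := by
  set T : ℝ := (2 : ℝ) ^ (1 / (b - b')) with hT
  have hT0 : 0 < T := Real.rpow_pos_of_pos two_pos _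
  refine ⟨T ^ b', Real.rpow_nonneg hT0.le _, fun t ht => ?_⟩
  rcases le_total t T with h | h
  · have h2 : t ^ b' ≤ T ^ b' := Real.rpow_le_rpow ht.le h hb'0.le
    nlinarith [Real.rpow_nonneg ht.le b]
  · have hTt : (2:ℝ) ≤ t ^ (b - b') := by
      have h2 : T ^ (b - b') ≤ t ^ (b - b') :=
        Real.rpow_le_rpow hT0.le h (by linarith)
      have hT2 : T ^ (b - b') = 2 := by
        rw [hT, ← Real.rpow_mul (by norm_num : (0:ℝ) ≤ 2), one_div,
          inv_mul_cancel₀ (by linarith : b - b' ≠ 0), Real.rpow_one]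
      linarith [hT2 ▸ h2]
    have hsplit : t ^ b = t ^ b' * t ^ (b - b') := by
      rw [← Real.rpow_add ht]; ring_nf
    have hb'nn : 0 ≤ t ^ b' := Real.rpow_nonneg ht.le _
    nlinarith [Real.rpow_nonneg hT0.le b', mul_nonneg hb'nn (by linarith : (0:ℝ) ≤ t ^ (b - b') - 2)]

set_option maxHeartbeats 2000000 in
theorem convolution_decay (X Y : Type*)
    [NormedAddCommGroup X] [NormedSpace ℝ X] [CompleteSpace X]
    [NormedAddCommGroup Y] [NormedSpace ℝ Y] [CompleteSpace Y]
    (ι : X →L[ℝ] Y)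
    (S : ℝ → X →L[ℝ] X) (SY : ℝ → Y →L[ℝ] Y)
    (a b α CX CY CXY : ℝ)
    (ha : 0 < a) (hb0 : 0 < b) (hb1 : b < 1) (hα : 0 < α)
    (hcomm : ∀ t : ℝ, (SY t).comp ι = ι.comp (S t))
    (hX : ∀ t > (0:ℝ), ‖S t‖ ≤ CX * Real.exp (-a * t ^ b))
    (hY : ∀ t > (0:ℝ), ‖SY t‖ ≤ CY * Real.exp (-a * t ^ b))
    (hXY : ∀ t > (0:ℝ), ‖ι.comp (S t)‖ ≤ CXY * t ^ (-α) * Real.exp (-a * t ^ b))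
    (Sn : ℕ → ℝ → X →L[ℝ] X)
    (hSn1 : Sn 1 = S)
    (hSnrec : ∀ n : ℕ, 1 ≤ n → ∀ t : ℝ,
      Sn (n + 1) t = ∫ s in (0:ℝ)..t, (S s).comp (Sn n (t - s))) :
    (∀ n : ℕ, 1 ≤ n → ∃ Cn : ℝ, ∀ t > (0:ℝ),
        ‖Sn n t‖ ≤ Cn * t ^ ((n : ℝ) - 1) * Real.exp (-a * t ^ b)) ∧
    (∀ n : ℕ, α + 1 < (n : ℝ) → ∀ b' : ℝ, 0 < b' → b' < b → ∃ Cn : ℝ, ∀ t > (0:ℝ),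
        ‖ι.comp (Sn n t)‖ ≤ Cn * Real.exp (-a * t ^ b')) := by
  -- nonnegativity of the constants
  have hCX : 0 ≤ CX := by
    have h := hX 1 one_pos
    nlinarith [norm_nonneg (S 1), Real.exp_pos (-a * (1:ℝ) ^ b)]
  have hCY : 0 ≤ CY := by
    have h := hY 1 one_pos
    nlinarith [norm_nonneg (SY 1), Real.exp_pos (-a * (1:ℝ) ^ b)]
  have hCXY : 0 ≤ CXY := by
    have h := hXY 1 one_pos
    rw [Real.one_rpow] at h
    nlinarith [norm_nonneg (ι.comp (S 1)), Real.exp_pos (-a * (1:ℝ) ^ b)]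
  -- the key exponential subadditivity estimate
  have hexpkey : ∀ t s : ℝ, 0 < s → s < t →
      Real.exp (-a * s ^ b) * Real.exp (-a * (t - s) ^ b) ≤ Real.exp (-a * t ^ b) := by
    intro t s hs hst
    rw [← Real.exp_add]
    apply Real.exp_le_exp.2
    have h3 : t ^ b ≤ s ^ b + (t - s) ^ b := by
      have h4 := aux_rpow_subadd b hb0.le hb1.le s (t - s) hs.le (by linarith)
      have h5 : s + (t - s) = t := by ring
      rwa [h5] at h4
    nlinarith
  have hae : ∀ t : ℝ, ∀ᵐ s : ℝ, s ≠ t := fun t => by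
    rw [ae_iff]
    simp only [ne_eq, not_not, Set.setOf_eq_eq_singleton]
    exact measure_singleton t
  -- Part 1 with explicit nonnegativity
  have key1 : ∀ n : ℕ, 1 ≤ n → ∃ Cn : ℝ, 0 ≤ Cn ∧ ∀ t > (0:ℝ),
      ‖Sn n t‖ ≤ Cn * t ^ ((n : ℝ) - 1) * Real.exp (-a * t ^ b) := by
    intro n hn
    induction n, hn using Nat.le_induction with
    | base =>
      refine ⟨CX, hCX, fun t ht => ?_⟩
      have h1 : ((1 : ℕ) : ℝ) - 1 = 0 := by norm_num
      rw [hSn1, h1, Real.rpow_zero, mul_one]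
      exact hX t ht
    | succ n hn ih =>
      obtain ⟨Cn, hCn0, hCn⟩ := ih
      refine ⟨CX * Cn, mul_nonneg hCX hCn0, fun t ht => ?_⟩
      rw [hSnrec n hn t]
      have hbound : ∀ᵐ s : ℝ, s ∈ Set.uIoc (0:ℝ) t →
          ‖(S s).comp (Sn n (t - s))‖ ≤
            CX * Cn * t ^ ((n : ℝ) - 1) * Real.exp (-a * t ^ b) := by
        filter_upwards [hae t] with s hsne hs
        rw [Set.uIoc_of_le ht.le] at hs
        obtain ⟨hs0, hst⟩ := hs
        have hst' : s < t := lt_of_le_of_ne hst hsne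
        have hts : 0 < t - s := by linarith
        have hn1 : (0:ℝ) ≤ (n : ℝ) - 1 := by
          have : (1:ℝ) ≤ (n : ℝ) := by exact_mod_cast hn
          linarith
        calc ‖(S s).comp (Sn n (t - s))‖ ≤ ‖S s‖ * ‖Sn n (t - s)‖ :=
              ContinuousLinearMap.opNorm_comp_le _ _
          _ ≤ (CX * Real.exp (-a * s ^ b)) *
              (Cn * (t - s) ^ ((n : ℝ) - 1) * Real.exp (-a * (t - s) ^ b)) := by
              apply mul_le_mul (hX s hs0) (hCn _ hts) (norm_nonneg _)
              exact mul_nonneg hCX (Real.exp_pos _).le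
          _ = (CX * Cn * (t - s) ^ ((n : ℝ) - 1)) *
              (Real.exp (-a * s ^ b) * Real.exp (-a * (t - s) ^ b)) := by ring
          _ ≤ (CX * Cn * t ^ ((n : ℝ) - 1)) * Real.exp (-a * t ^ b) := by
              apply mul_le_mul
              · apply mul_le_mul_of_nonneg_left _ (mul_nonneg hCX hCn0)
                exact Real.rpow_le_rpow hts.le (by linarith) hn1
              · exact hexpkey t s hs0 hst'
              · positivity
              · exact mul_nonneg (mul_nonneg hCX hCn0) (Real.rpow_nonneg ht.le _)
      have hle := intervalIntegral.norm_integral_le_of_norm_le_const_ae hbound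
      rw [sub_zero, abs_of_pos ht] at hle
      refine hle.trans (le_of_eq ?_)
      have hcast : ((n : ℝ) + 1) - 1 = ((n : ℝ) - 1) + 1 := by ring
      push_cast
      rw [hcast, Real.rpow_add ht, Real.rpow_one]
      ring
  -- Part 2 auxiliary: bound on the X → Y norms with singular weight
  have key2 : ∀ n : ℕ, 1 ≤ n → ∃ Cn : ℝ, 0 ≤ Cn ∧ ∀ t > (0:ℝ),
      ‖ι.comp (Sn n t)‖ ≤ Cn * t ^ ((n : ℝ) - 1 - α) * Real.exp (-a * t ^ b) := by
    intro n hn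
    induction n, hn using Nat.le_induction with
    | base =>
      refine ⟨CXY, hCXY, fun t ht => ?_⟩
      have h1 : ((1 : ℕ) : ℝ) - 1 - α = -α := by norm_num
      rw [hSn1, h1]
      exact hXY t ht
    | succ n hn ih =>
      obtain ⟨Cn, hCn0, hCn⟩ := ih
      obtain ⟨Dn, hDn0, hDn⟩ := key1 n hn
      refine ⟨CY * Cn * ((2:ℝ) ^ (-((n:ℝ) - 1 - α)) + 1) + CXY * Dn * (2:ℝ) ^ α,
        by positivity, fun t ht => ?_⟩
      set β' : ℝ := (n : ℝ) - 1 - α with hβ'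
      by_cases hint : IntervalIntegrable (fun s => (S s).comp (Sn n (t - s))) volume 0 t
      · have heq : ι.comp (Sn (n+1) t) =
            ∫ s in (0:ℝ)..t, (ContinuousLinearMap.compL ℝ X X Y ι) ((S s).comp (Sn n (t - s))) := by
          rw [hSnrec n hn t]
          exact ((ContinuousLinearMap.compL ℝ X X Y ι).intervalIntegral_comp_comm hint).symm
        rw [heq]
        set K : ℝ := (CY * Cn * ((t/2) ^ β' + t ^ β') +
            CXY * Dn * ((t/2) ^ (-α) * t ^ ((n:ℝ) - 1))) * Real.exp (-a * t ^ b) with hK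
        have ht2 : 0 < t / 2 := by linarith
        have hn1 : (0:ℝ) ≤ (n : ℝ) - 1 := by
          have : (1:ℝ) ≤ (n : ℝ) := by exact_mod_cast hn
          linarith
        have hbound : ∀ᵐ s : ℝ, s ∈ Set.uIoc (0:ℝ) t →
            ‖(ContinuousLinearMap.compL ℝ X X Y ι) ((S s).comp (Sn n (t - s)))‖ ≤ K := by
          filter_upwards [hae t] with s hsne hs
          rw [Set.uIoc_of_le ht.le] at hs
          obtain ⟨hs0, hst⟩ := hs
          have hst' : s < t := lt_of_le_of_ne hst hsne
          have hts : 0 < t - s := by linarith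
          rw [ContinuousLinearMap.compL_apply]
          have hassoc : ι.comp ((S s).comp (Sn n (t - s))) =
              (SY s).comp (ι.comp (Sn n (t - s))) := by
            rw [← ContinuousLinearMap.comp_assoc, ← hcomm, ContinuousLinearMap.comp_assoc]
          have hassoc2 : ι.comp ((S s).comp (Sn n (t - s))) =
              (ι.comp (S s)).comp (Sn n (t - s)) := by
            rw [ContinuousLinearMap.comp_assoc]
          have hterm2 : (0:ℝ) ≤ CXY * Dn * ((t/2) ^ (-α) * t ^ ((n:ℝ) - 1)) := by positivity
          have hterm1 : (0:ℝ) ≤ CY * Cn * ((t/2) ^ β' + t ^ β') := by positivity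
          rcases le_total s (t/2) with hhalf | hhalf
          · -- use the Y→Y bound on SY s and induction hypothesis
            have h1 : ‖ι.comp ((S s).comp (Sn n (t - s)))‖ ≤
                ‖SY s‖ * ‖ι.comp (Sn n (t - s))‖ := by
              rw [hassoc]; exact ContinuousLinearMap.opNorm_comp_le _ _
            have h2 : ‖SY s‖ * ‖ι.comp (Sn n (t - s))‖ ≤
                (CY * Real.exp (-a * s ^ b)) *
                (Cn * (t - s) ^ β' * Real.exp (-a * (t - s) ^ b)) := by
              apply mul_le_mul (hY s hs0) (hCn _ hts) (norm_nonneg _)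
              exact mul_nonneg hCY (Real.exp_pos _).le
            have h3 : (t - s) ^ β' ≤ (t/2) ^ β' + t ^ β' :=
              aux_between (t/2) t (t - s) β' ht2 (by linarith) (by linarith)
            calc ‖ι.comp ((S s).comp (Sn n (t - s)))‖ ≤
                (CY * Real.exp (-a * s ^ b)) *
                  (Cn * (t - s) ^ β' * Real.exp (-a * (t - s) ^ b)) := h1.trans h2
              _ = (CY * Cn * (t - s) ^ β') *
                  (Real.exp (-a * s ^ b) * Real.exp (-a * (t - s) ^ b)) := by ring
              _ ≤ (CY * Cn * ((t/2) ^ β' + t ^ β')) * Real.exp (-a * t ^ b) := by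
                  apply mul_le_mul
                  · exact mul_le_mul_of_nonneg_left h3 (mul_nonneg hCY hCn0)
                  · exact hexpkey t s hs0 hst'
                  · positivity
                  · exact hterm1
              _ ≤ K := by
                  rw [hK]
                  have := Real.exp_pos (-a * t ^ b)
                  nlinarith
          · -- use the X→Y bound on ι ∘ S s and the X→X bound on Sn n
            have h1 : ‖ι.comp ((S s).comp (Sn n (t - s)))‖ ≤
                ‖ι.comp (S s)‖ * ‖Sn n (t - s)‖ := by
              rw [hassoc2]; exact ContinuousLinearMap.opNorm_comp_le _ _
            have h2 : ‖ι.comp (S s)‖ * ‖Sn n (t - s)‖ ≤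
                (CXY * s ^ (-α) * Real.exp (-a * s ^ b)) *
                (Dn * (t - s) ^ ((n:ℝ) - 1) * Real.exp (-a * (t - s) ^ b)) := by
              apply mul_le_mul (hXY s hs0) (hDn _ hts) (norm_nonneg _)
              positivity
            have h3 : s ^ (-α) ≤ (t/2) ^ (-α) :=
              Real.rpow_le_rpow_of_nonpos ht2 hhalf (by linarith)
            have h4 : (t - s) ^ ((n:ℝ) - 1) ≤ t ^ ((n:ℝ) - 1) :=
              Real.rpow_le_rpow hts.le (by linarith) hn1
            calc ‖ι.comp ((S s).comp (Sn n (t - s)))‖ ≤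
                (CXY * s ^ (-α) * Real.exp (-a * s ^ b)) *
                  (Dn * (t - s) ^ ((n:ℝ) - 1) * Real.exp (-a * (t - s) ^ b)) := h1.trans h2
              _ = (CXY * Dn * (s ^ (-α) * (t - s) ^ ((n:ℝ) - 1))) *
                  (Real.exp (-a * s ^ b) * Real.exp (-a * (t - s) ^ b)) := by ring
              _ ≤ (CXY * Dn * ((t/2) ^ (-α) * t ^ ((n:ℝ) - 1))) * Real.exp (-a * t ^ b) := by
                  apply mul_le_mul
                  · apply mul_le_mul_of_nonneg_left _ (mul_nonneg hCXY hDn0)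
                    apply mul_le_mul h3 h4 (Real.rpow_nonneg hts.le _) (Real.rpow_nonneg ht2.le _)
                  · exact hexpkey t s hs0 hst'
                  · positivity
                  · exact hterm2
              _ ≤ K := by
                  rw [hK]
                  have := Real.exp_pos (-a * t ^ b)
                  nlinarith
        have hle := intervalIntegral.norm_integral_le_of_norm_le_const_ae hbound
        rw [sub_zero, abs_of_pos ht] at hle
        refine hle.trans ?_
        -- algebraic rewriting of K * t
        have hhalf1 : (t/2 : ℝ) ^ β' = (2:ℝ) ^ (-β') * t ^ β' := by
          rw [Real.div_rpow ht.le (by norm_num : (0:ℝ) ≤ 2),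
            Real.rpow_neg (by norm_num : (0:ℝ) ≤ 2)]
          ring
        have hhalf2 : (t/2 : ℝ) ^ (-α) = (2:ℝ) ^ α * t ^ (-α) := by
          rw [Real.div_rpow ht.le (by norm_num : (0:ℝ) ≤ 2),
            Real.rpow_neg (by norm_num : (0:ℝ) ≤ 2) α, div_eq_mul_inv, inv_inv]
          ring
        have hsplit : t ^ (-α) * t ^ ((n:ℝ) - 1) = t ^ β' := by
          rw [← Real.rpow_add ht, hβ']; ring_nf
        have hstep : t ^ β' * t = t ^ (((n:ℕ) + 1 : ℝ) - 1 - α) := by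
          have : (((n:ℕ) + 1 : ℝ)) - 1 - α = β' + 1 := by rw [hβ']; push_cast; ring
          rw [this, Real.rpow_add_one (ne_of_gt ht)]
        rw [hK]
        push_cast
        rw [hhalf1, hhalf2]
        calc ((CY * Cn * ((2:ℝ) ^ (-β') * t ^ β' + t ^ β') +
              CXY * Dn * ((2:ℝ) ^ α * t ^ (-α) * t ^ ((n:ℝ) - 1))) * Real.exp (-a * t ^ b)) * t
            = (CY * Cn * ((2:ℝ) ^ (-β') + 1) + CXY * Dn * (2:ℝ) ^ α) *
              (t ^ β' * t) * Real.exp (-a * t ^ b) := by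
              linear_combination (CXY * Dn * (2:ℝ) ^ α * Real.exp (-a * t ^ b) * t) * hsplit
          _ = (CY * Cn * ((2:ℝ) ^ (-β') + 1) + CXY * Dn * (2:ℝ) ^ α) *
              t ^ (((n:ℕ) + 1 : ℝ) - 1 - α) * Real.exp (-a * t ^ b) := by rw [hstep]
          _ ≤ _ := by push_cast; exact le_refl _
      · -- non-integrable case: the integral (hence the operator) is zero
        rw [hSnrec n hn t, intervalIntegral.integral_undef hint,
          ContinuousLinearMap.comp_zero, norm_zero]
        positivity
  refine ⟨fun n hn => (key1 n hn).imp (fun Cn h => h.2), fun n hn b' hb'0 hb'b => ?_⟩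
  -- final statement: change of stretched exponent
  have hn1 : 1 ≤ n := by
    have h1 : (1:ℝ) ≤ (n:ℝ) := by linarith
    exact_mod_cast h1
  obtain ⟨C, hC0, hC⟩ := key2 n hn1
  set β : ℝ := (n : ℝ) - 1 - α with hβ
  have hβ0 : 0 ≤ β := by rw [hβ]; linarith
  obtain ⟨K, hK0, hK⟩ := aux_growth b (a/2) β hb0 (by linarith) hβ0
  obtain ⟨M, hM0, hM⟩ := aux_bprime b b' hb'0 hb'b
  refine ⟨C * K * Real.exp (a * M), fun t ht => ?_⟩
  have h1 := hC t ht
  have h2 := hK t ht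
  have h3 := hM t ht
  have hE : Real.exp (-a * t ^ b) = Real.exp (-(a/2) * t ^ b) * Real.exp (-(a/2) * t ^ b) := by
    rw [← Real.exp_add]; ring_nf
  calc ‖ι.comp (Sn n t)‖ ≤ C * t ^ β * Real.exp (-a * t ^ b) := h1
    _ ≤ C * (K * Real.exp ((a/2) * t ^ b)) * Real.exp (-a * t ^ b) := by
        apply mul_le_mul_of_nonneg_right _ (Real.exp_pos _).le
        exact mul_le_mul_of_nonneg_left h2 hC0
    _ = C * K * Real.exp (-(a/2) * t ^ b) := by
        rw [show -(a/2) * t ^ b = (a/2) * t ^ b + -a * t ^ b from by ring, Real.exp_add]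
        ring
    _ ≤ C * K * Real.exp (a * M - a * t ^ b') := by
        apply mul_le_mul_of_nonneg_left _ (mul_nonneg hC0 hK0)
        apply Real.exp_le_exp.2
        nlinarith [mul_le_mul_of_nonneg_left h3 ha.le]
    _ = C * K * Real.exp (a * M) * Real.exp (-a * t ^ b') := by
        rw [show a * M - a * t ^ b' = a * M + -a * t ^ b' from by ring, Real.exp_add]
        ring
end

section
/- Lyapunov estimate for H = 3|v|² + 2x·v + |x|² + 1 with V(x) = ⟨x⟩^γ, γ ∈ (0,1): for any k ≥ 1 there exist constants C, K, R > 0 such that for all (x,v) ∈ ℝ^{2d}, Δᵥ H + (k−1)|∇ᵥH|²/H + v·∇ₓH − v·∇ᵥH − ∇ₓV(x)·∇ᵥH ≤ −C H^{γ/2} + K 𝟙_{|x|²+|v|² ≤ 2R²}. -/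
open Real RealInnerProductSpace

noncomputable section

private lemma rpow_add_le_add_rpow' {x y p : ℝ} (hx : 0 ≤ x) (hy : 0 ≤ y)
    (hp : 0 ≤ p) (hp1 : p ≤ 1) : (x + y) ^ p ≤ x ^ p + y ^ p := by
  lift x to NNReal using hx
  lift y to NNReal using hy
  exact_mod_cast NNReal.rpow_add_le_add_rpow x y hp hp1

set_option maxHeartbeats 1600000 in
private lemma scalar_main (γ k D R : ℝ) (hγ0 : 0 < γ) (hγ1 : γ < 1) (hk : 1 ≤ k)
    (hD : 0 ≤ D) (hR2 : 2 ≤ R) (hRA : D + 144 * (k - 1) + 3 ≤ R)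
    (hRγ : D + 144 * (k - 1) + 7 ≤ γ * R ^ γ)
    (a b s q : ℝ) (ha : 0 ≤ a) (hb : 0 ≤ b) (hs : |s| ≤ a * b)
    (hq0 : 0 ≤ q) (hq : q ≤ 72 * b ^ 2 + 8 * a ^ 2) :
    D + (k - 1) * q / (3 * b ^ 2 + 2 * s + a ^ 2 + 1)
      + (2 * b ^ 2 + 2 * s) - (6 * b ^ 2 + 2 * s)
      - γ * (1 + a ^ 2) ^ (γ/2 - 1) * (6 * s + 2 * a ^ 2)
    ≤ -(γ/2) * (3 * b ^ 2 + 2 * s + a ^ 2 + 1) ^ (γ/2)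
      + (if a ^ 2 + b ^ 2 ≤ 2 * R ^ 2 then D + 144 * (k - 1) + 2 * R ^ 2 + 14 * R + 6
          else 0) := by
  have hs1 : -(a * b) ≤ s := neg_le_of_abs_le hs
  have hs2 : s ≤ a * b := le_of_abs_le hs
  have hH1 : 1 + (a ^ 2 + b ^ 2) / 2 ≤ 3 * b ^ 2 + 2 * s + a ^ 2 + 1 := by
    nlinarith [sq_nonneg (a - 2 * b)]
  have hHpos : (1:ℝ) ≤ 3 * b ^ 2 + 2 * s + a ^ 2 + 1 := by nlinarith
  have hbase : (1:ℝ) ≤ 1 + a ^ 2 := by nlinarith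
  have hbase0 : (0:ℝ) < 1 + a ^ 2 := by linarith
  -- rpow facts about explicit expressions
  have hQ : (k - 1) * q / (3 * b ^ 2 + 2 * s + a ^ 2 + 1) ≤ 144 * (k - 1) := by
    rw [div_le_iff₀ (by linarith : (0:ℝ) < 3 * b ^ 2 + 2 * s + a ^ 2 + 1)]
    nlinarith
  have hP0 : (0:ℝ) ≤ (1 + a ^ 2) ^ (γ/2) := Real.rpow_nonneg (by linarith) _
  have hP1 : (1:ℝ) ≤ (1 + a ^ 2) ^ (γ/2) := Real.one_le_rpow hbase (by linarith)
  have hPle : (1 + a ^ 2) ^ (γ/2) ≤ 1 + a ^ 2 := by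
    calc (1 + a ^ 2) ^ (γ/2) ≤ (1 + a ^ 2) ^ (1:ℝ) :=
          Real.rpow_le_rpow_of_exponent_le hbase (by linarith)
    _ = 1 + a ^ 2 := Real.rpow_one _
  have hp_le_one : (1 + a ^ 2) ^ (γ/2 - 1) ≤ 1 :=
    Real.rpow_le_one_of_one_le_of_nonpos hbase (by linarith)
  have hp_nonneg : 0 ≤ (1 + a ^ 2) ^ (γ/2 - 1) := Real.rpow_nonneg (by linarith) _
  have hpa : (1 + a ^ 2) ^ (γ/2 - 1) * a ≤ 1 := by
    have h1 : a ≤ (1 + a ^ 2) ^ ((1:ℝ)/2) := by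
      rw [← Real.sqrt_eq_rpow]
      calc a = Real.sqrt (a ^ 2) := (Real.sqrt_sq ha).symm
      _ ≤ Real.sqrt (1 + a ^ 2) := Real.sqrt_le_sqrt (by linarith)
    calc (1 + a ^ 2) ^ (γ/2 - 1) * a ≤ (1 + a ^ 2) ^ (γ/2 - 1) * (1 + a ^ 2) ^ ((1:ℝ)/2) :=
          mul_le_mul_of_nonneg_left h1 hp_nonneg
    _ = (1 + a ^ 2) ^ (γ/2 - 1 + 1/2) := (Real.rpow_add hbase0 _ _).symm
    _ ≤ 1 := Real.rpow_le_one_of_one_le_of_nonpos hbase (by linarith)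
  have hpa2 : (1 + a ^ 2) ^ (γ/2) - 1 ≤ (1 + a ^ 2) ^ (γ/2 - 1) * a ^ 2 := by
    have h1 : (1 + a ^ 2) ^ (γ/2 - 1) * (1 + a ^ 2) = (1 + a ^ 2) ^ (γ/2) := by
      rw [← Real.rpow_add_one hbase0.ne']; ring_nf
    nlinarith
  have hG0 : 0 ≤ (3 * b ^ 2 + 2 * s + a ^ 2 + 1) ^ (γ/2) :=
    Real.rpow_nonneg (by linarith) _
  have hHrpow : (3 * b ^ 2 + 2 * s + a ^ 2 + 1) ^ (γ/2)
      ≤ 2 * (1 + a ^ 2) ^ (γ/2) + 2 * (1 + b) := by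
    have hH4 : 3 * b ^ 2 + 2 * s + a ^ 2 + 1 ≤ 4 * (1 + a ^ 2) + 4 * b ^ 2 := by
      nlinarith [sq_nonneg (a - b)]
    have hm1 : (3 * b ^ 2 + 2 * s + a ^ 2 + 1) ^ (γ/2)
        ≤ (4 * (1 + a ^ 2) + 4 * b ^ 2) ^ (γ/2) :=
      Real.rpow_le_rpow (by linarith) hH4 (by linarith)
    have hm2 : (4 * (1 + a ^ 2) + 4 * b ^ 2) ^ (γ/2)
        ≤ (4 * (1 + a ^ 2)) ^ (γ/2) + (4 * b ^ 2) ^ (γ/2) :=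
      rpow_add_le_add_rpow' (by positivity) (by positivity) (by linarith) (by linarith)
    have h4γ : (4:ℝ) ^ (γ/2) ≤ 2 := by
      calc (4:ℝ) ^ (γ/2) ≤ (4:ℝ) ^ ((1:ℝ)/2) :=
            Real.rpow_le_rpow_of_exponent_le (by norm_num) (by linarith)
      _ = 2 := by
          rw [show (4:ℝ) = 2 ^ (2:ℕ) by norm_num, ← Real.rpow_natCast 2 2,
            ← Real.rpow_mul (by norm_num)]
          norm_num
    have hm3 : (4 * (1 + a ^ 2)) ^ (γ/2) ≤ 2 * (1 + a ^ 2) ^ (γ/2) := by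
      rw [Real.mul_rpow (by norm_num) (by linarith)]
      exact mul_le_mul_of_nonneg_right h4γ hP0
    have hbγ : (b ^ 2) ^ (γ/2) ≤ 1 + b := by
      have hb2 : (b ^ 2) ^ (γ/2) = b ^ γ := by
        rw [← Real.rpow_natCast b 2, ← Real.rpow_mul hb]; congr 1; ring
      rw [hb2]
      rcases le_or_gt b 1 with h | h
      · have : b ^ γ ≤ 1 := Real.rpow_le_one hb h hγ0.le
        linarith
      · have : b ^ γ ≤ b ^ (1:ℝ) := Real.rpow_le_rpow_of_exponent_le h.le hγ1.le
        rw [Real.rpow_one] at this; linarith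
    have hm4 : (4 * b ^ 2) ^ (γ/2) ≤ 2 * (1 + b) := by
      rw [Real.mul_rpow (by norm_num) (by positivity)]
      have h0 : (0:ℝ) ≤ (b ^ 2) ^ (γ/2) := Real.rpow_nonneg (by positivity) _
      nlinarith [mul_le_mul_of_nonneg_right h4γ h0]
    linarith
  have hRP : R ≤ a → R ^ γ ≤ (1 + a ^ 2) ^ (γ/2) := by
    intro haR
    have h2 : R ^ γ = (R ^ 2) ^ (γ/2) := by
      rw [← Real.rpow_natCast R 2, ← Real.rpow_mul (by linarith)]; congr 1; ring
    rw [h2]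
    exact Real.rpow_le_rpow (by positivity) (by nlinarith) (by linarith)
  -- generalize all rpow atoms
  set p : ℝ := (1 + a ^ 2) ^ (γ/2 - 1) with hpdef
  set P : ℝ := (1 + a ^ 2) ^ (γ/2) with hPdef
  set G : ℝ := (3 * b ^ 2 + 2 * s + a ^ 2 + 1) ^ (γ/2) with hGdef
  set Rg : ℝ := R ^ γ with hRgdef
  clear_value p P G Rg
  clear hpdef hPdef hGdef hRgdef
  -- cross term bound
  have hcross : -(γ * p * (6 * s + 2 * a ^ 2)) ≤ 6 * γ * b + 2 * γ - 2 * γ * P := by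
    have h1 : γ * p * (-s) ≤ γ * p * (a * b) :=
      mul_le_mul_of_nonneg_left (by linarith) (by positivity)
    have h2 : γ * (p * a) * b ≤ γ * 1 * b := by
      have := mul_le_mul_of_nonneg_right hpa hb
      nlinarith
    have h3 : γ * (P - 1) ≤ γ * (p * a ^ 2) := mul_le_mul_of_nonneg_left hpa2 hγ0.le
    nlinarith [h1, h2, h3]
  have hCH : γ/2 * G ≤ γ * P + γ + γ * b := by nlinarith [hHrpow]
  by_cases hball : a ^ 2 + b ^ 2 ≤ 2 * R ^ 2
  · rw [if_pos hball]
    have hb2R : b ≤ 2 * R := by nlinarith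
    have hsmall : γ/2 * G ≤ (1 + a ^ 2) + 1 + b := by
      have h1 : γ * P ≤ P := by nlinarith
      have h2 : γ * b ≤ b := by nlinarith
      linarith [hCH, hPle]
    nlinarith [hQ, hcross, sq_nonneg b]
  · rw [if_neg hball]
    push_neg at hball
    have key : D + 144 * (k - 1) + 3 + 7 * b - 4 * b ^ 2 ≤ γ * P := by
      rcases le_or_gt R b with hbR | hbR
      · have h1 : D + 144 * (k - 1) + 3 ≤ 4 * b ^ 2 - 7 * b := by
          have h2 : D + 144 * (k - 1) + 3 ≤ 4 * R ^ 2 - 7 * R := by nlinarith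
          nlinarith [mul_nonneg (sub_nonneg.2 hbR)
            (by linarith : (0:ℝ) ≤ 4 * (b + R) - 7)]
        nlinarith
      · have haR : R ≤ a := by nlinarith
        have h1 : Rg ≤ P := hRP haR
        have h3 : D + 144 * (k - 1) + 7 ≤ γ * P := by
          calc D + 144 * (k - 1) + 7 ≤ γ * Rg := hRγ
          _ ≤ γ * P := mul_le_mul_of_nonneg_left h1 hγ0.le
        nlinarith [sq_nonneg (2 * b - 7/4)]
    nlinarith [hQ, hcross, hCH]

set_option maxHeartbeats 1600000 in
theorem lyapunov_estimate (d : ℕ) (γ : ℝ) (hγ : γ ∈ Set.Ioo (0:ℝ) 1) (k : ℝ) (hk : 1 ≤ k) :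
    ∃ C > (0:ℝ), ∃ K > (0:ℝ), ∃ R > (0:ℝ),
      ∀ x v : EuclideanSpace ℝ (Fin d),
        (6 * d : ℝ)
          + (k - 1) * ‖(6:ℝ) • v + (2:ℝ) • x‖ ^ 2
              / (3 * ‖v‖ ^ 2 + 2 * ⟪x, v⟫ + ‖x‖ ^ 2 + 1)
          + ⟪v, (2:ℝ) • v + (2:ℝ) • x⟫
          - ⟪v, (6:ℝ) • v + (2:ℝ) • x⟫
          - ⟪(γ * (1 + ‖x‖ ^ 2) ^ (γ/2 - 1)) • x, (6:ℝ) • v + (2:ℝ) • x⟫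
        ≤ -C * (3 * ‖v‖ ^ 2 + 2 * ⟪x, v⟫ + ‖x‖ ^ 2 + 1) ^ (γ/2)
          + (if ‖x‖ ^ 2 + ‖v‖ ^ 2 ≤ 2 * R ^ 2 then K else 0) := by
  obtain ⟨hγ0, hγ1⟩ := hγ
  have hD0 : (0:ℝ) ≤ 6 * d := by positivity
  set A : ℝ := 6 * d + 144 * (k - 1) with hAdef
  have hA0 : 0 ≤ A := by simp only [hAdef]; nlinarith
  set M : ℝ := ((A + 7) / γ) ^ (1/γ : ℝ) with hMdef
  have hM0 : 0 ≤ M := Real.rpow_nonneg (by positivity) _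
  set R : ℝ := max 2 (max (A + 3) M) with hRdef
  have hR2 : (2:ℝ) ≤ R := le_max_left _ _
  have hR0 : (0:ℝ) < R := by linarith
  have hRA : A + 3 ≤ R := le_trans (le_max_left _ _) (le_max_right _ _)
  have hRM : M ≤ R := le_trans (le_max_right _ _) (le_max_right _ _)
  have hRγ : A + 7 ≤ γ * R ^ γ := by
    have h1 : M ^ γ ≤ R ^ γ := Real.rpow_le_rpow hM0 hRM hγ0.le
    have h2 : M ^ γ = (A + 7) / γ := by
      rw [hMdef, ← Real.rpow_mul (by positivity), one_div, inv_mul_cancel₀ hγ0.ne',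
        Real.rpow_one]
    have h3 : (A + 7) / γ ≤ R ^ γ := h2 ▸ h1
    have h4 : γ * ((A + 7) / γ) ≤ γ * R ^ γ := mul_le_mul_of_nonneg_left h3 hγ0.le
    calc A + 7 = γ * ((A + 7) / γ) := by field_simp
    _ ≤ γ * R ^ γ := h4
  clear_value R
  refine ⟨γ/2, by linarith, A + 2 * R ^ 2 + 14 * R + 6, by nlinarith, R, hR0, ?_⟩
  intro x v
  have e1 : ⟪v, (2:ℝ) • v + (2:ℝ) • x⟫ = 2 * ‖v‖ ^ 2 + 2 * ⟪x, v⟫ := by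
    rw [inner_add_right, real_inner_smul_right, real_inner_smul_right,
      real_inner_self_eq_norm_sq, real_inner_comm v x]
  have e2 : ⟪v, (6:ℝ) • v + (2:ℝ) • x⟫ = 6 * ‖v‖ ^ 2 + 2 * ⟪x, v⟫ := by
    rw [inner_add_right, real_inner_smul_right, real_inner_smul_right,
      real_inner_self_eq_norm_sq, real_inner_comm v x]
  have e3 : ⟪(γ * (1 + ‖x‖ ^ 2) ^ (γ/2 - 1)) • x, (6:ℝ) • v + (2:ℝ) • x⟫
      = γ * (1 + ‖x‖ ^ 2) ^ (γ/2 - 1) * (6 * ⟪x, v⟫ + 2 * ‖x‖ ^ 2) := by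
    rw [inner_add_right, real_inner_smul_left, real_inner_smul_left,
      real_inner_smul_right, real_inner_smul_right, real_inner_self_eq_norm_sq]
    ring
  have hn : ‖(6:ℝ) • v + (2:ℝ) • x‖ ≤ 6 * ‖v‖ + 2 * ‖x‖ := by
    refine (norm_add_le _ _).trans ?_
    rw [norm_smul, norm_smul]
    norm_num [Real.norm_eq_abs]
  have hq : ‖(6:ℝ) • v + (2:ℝ) • x‖ ^ 2 ≤ 72 * ‖v‖ ^ 2 + 8 * ‖x‖ ^ 2 := by
    nlinarith [pow_le_pow_left₀ (norm_nonneg ((6:ℝ) • v + (2:ℝ) • x)) hn 2,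
      sq_nonneg (6 * ‖v‖ - 2 * ‖x‖), norm_nonneg x, norm_nonneg v]
  rw [e1, e2, e3]
  have hfin := scalar_main γ k (6 * d) R hγ0 hγ1 hk hD0 hR2 (by linarith) (by linarith)
    ‖x‖ ‖v‖ ⟪x, v⟫ (‖(6:ℝ) • v + (2:ℝ) • x‖ ^ 2)
    (norm_nonneg x) (norm_nonneg v) (abs_real_inner_le_norm x v)
    (by positivity) hq
  convert hfin using 2
end
end
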